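/- Let X be a semigraph algebra, f : X → Y the quotient map onto the quotient Y of X by a subset of the fiber space of X (so Y carries the induced degree map). Then f restricted to f⁻¹(f(𝒯)\{0}) ∩ 𝒯 is injective: if s, t ∈ 𝒯 with f(s) = f(t) ≠ 0, then s = t. -/

import Mathlib

/-- The set of minimal common extensions `𝒯₁^{(min)}(x,y)` of `x` and `y`:
pairs `(α,β)` in `𝒯₁` with `xα = yβ ≠ 0` of degree `d(x) ⊔ d(y)`. -/
def mceSet {k X : Type*} [Ring X] (T1 : Set X) (deg : X → (k →₀ ℕ))
    (x y : X) : Set (X × X) :=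
  {ab | ab.1 ∈ T1 ∧ ab.2 ∈ T1 ∧ x * ab.1 ≠ 0 ∧ x * ab.1 = y * ab.2 ∧
    deg (x * ab.1) = deg x ⊔ deg y}

/-- A `k`-semigraph algebra (Definition `DefSemigraphAlgebra`): a `*`-algebra
generated by a commuting multiplicatively closed set `𝒫` of projections and a
set `𝒯` of nonzero partial isometries forming a non-unital finitely aligned
`k`-semigraph (with unitization `𝒯₁ = 𝒯 ∪ {1}`), subject to the commutation
relations `p x = x q`, the expansion of `x* y` over minimal common extensions,
and carrying a gauge action (equivalently, it is the quotient of the free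
`*`-algebra by a subset of the fiber space). -/
structure SemigraphAlgebra (k : Type*) (X : Type*) [Ring X] [StarRing X]
    [Algebra ℂ X] where
  P : Set X
  T : Set X
  deg : X → (k →₀ ℕ)
  P_isProj : ∀ p ∈ P, p * p = p ∧ star p = p
  P_comm : ∀ p ∈ P, ∀ q ∈ P, p * q = q * p
  P_mulClosed : ∀ p ∈ P, ∀ q ∈ P, p * q ∈ P
  disjoint : ∀ t ∈ T, t ∉ P
  T_ne_zero : ∀ t ∈ T, t ≠ 0
  T_pisom : ∀ t ∈ T, t * star t * t = t
  T_mulClosed : ∀ s ∈ T, ∀ t ∈ T, s * t ≠ 0 → s * t ∈ T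
  one_notMem : (1 : X) ∉ T
  deg_one : deg 1 = 0
  deg_pos : ∀ t ∈ T, deg t ≠ 0
  deg_mul : ∀ s ∈ T, ∀ t ∈ T, s * t ≠ 0 → deg (s * t) = deg s + deg t
  ufp : ∀ x ∈ T, ∀ n₁ n₂ : k →₀ ℕ, deg x = n₁ + n₂ →
    ∃! ab : X × X, ab.1 ∈ insert (1:X) T ∧ ab.2 ∈ insert (1:X) T ∧
      x = ab.1 * ab.2 ∧ deg ab.1 = n₁ ∧ deg ab.2 = n₂
  finitelyAligned : ∀ x ∈ insert (1:X) T, ∀ y ∈ insert (1:X) T,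
    (mceSet (insert (1:X) T) deg x y).Finite
  P_commute_T : ∀ x ∈ T, ∀ p ∈ P, ∃ q ∈ P, p * x = x * q
  expansion : ∀ x (hx : x ∈ T), ∀ y (hy : y ∈ T), ∃ q : X × X → X,
    (∀ ab ∈ mceSet (insert (1:X) T) deg x y, q ab ∈ P) ∧
    star x * y =
      ∑ ab ∈ (finitelyAligned x (Set.mem_insert_of_mem _ hx)
          y (Set.mem_insert_of_mem _ hy)).toFinset,
        ab.1 * q ab * star ab.2
  gauge : ∀ lam : k → ℂ, (∀ i, ‖lam i‖ = 1) →
    ∃ σ : X ≃ₐ[ℂ] X, (∀ p ∈ P, σ p = p) ∧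
      ∀ t ∈ T, σ t = (∏ i ∈ (deg t).support, lam i ^ (deg t i)) • t

namespace SemigraphAlgebra

variable {k X : Type*} [Ring X] [StarRing X] [Algebra ℂ X]

/-- `𝒯₁`, the unitization of the semigraph `𝒯`. -/
def T1 (A : SemigraphAlgebra k X) : Set X := insert 1 A.T

end SemigraphAlgebra

/-- Lemma `lemmaQuotientSemigraphAlgebra` (injectivity claim): if `f : X → Y`
is a `*`-homomorphism from a semigraph algebra onto a quotient by a subset of
the fiber space — so `Y` carries an induced degree map `dY` with
`dY (f t) = d(t)` for `t ∈ 𝒯` with `f t ≠ 0` — then `f` is injective on the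
part of `𝒯` not mapped to zero: `f s = f t ≠ 0` implies `s = t`. -/
theorem SemigraphAlgebra.quotient_injective_on_T
    {k X Y : Type*} [Ring X] [StarRing X] [Algebra ℂ X]
    [Ring Y] [StarRing Y]
    (A : SemigraphAlgebra k X) (f : X →+* Y)
    (hfstar : ∀ x : X, f (star x) = star (f x))
    (dY : Y → (k →₀ ℕ))
    (hdY : ∀ t ∈ A.T, f t ≠ 0 → dY (f t) = A.deg t)
    (s t : X) (hs : s ∈ A.T) (ht : t ∈ A.T)
    (h : f s = f t) (hne : f s ≠ 0) : s = t := by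
  by_contra hst
  have hdeg : A.deg s = A.deg t := by
    have h1 := hdY s hs hne
    have h2 := hdY t ht (h ▸ hne)
    rw [h] at h1
    exact h1.symm.trans h2
  have hmce : mceSet (insert (1:X) A.T) A.deg s t = ∅ := by
    ext ab
    simp only [Set.mem_empty_iff_false, iff_false]
    rintro ⟨ha, hb, hne', heq, hd⟩
    rw [hdeg, sup_idem] at hd
    have ha1 : ab.1 = 1 := by
      rcases ha with ha | ha
      · exact ha
      · exfalso
        rw [A.deg_mul s hs ab.1 ha hne', hdeg] at hd
        exact A.deg_pos ab.1 ha (add_eq_left.mp hd)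
    rw [ha1, mul_one] at heq hd hne'
    have hb1 : ab.2 = 1 := by
      rcases hb with hb | hb
      · exact hb
      · exfalso
        rw [heq, A.deg_mul t ht ab.2 hb (heq ▸ hne')] at hd
        exact A.deg_pos ab.2 hb (add_eq_left.mp hd)
    rw [hb1, mul_one] at heq
    exact hst heq
  have hzero : star s * t = 0 := by
    obtain ⟨q, hq, hexp⟩ := A.expansion s hs t ht
    rw [hexp]
    have he : (A.finitelyAligned s (Set.mem_insert_of_mem _ hs)
        t (Set.mem_insert_of_mem _ ht)).toFinset = ∅ := by
      simp [hmce]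
    rw [he, Finset.sum_empty]
  apply hne
  calc f s = f (s * star s * s) := by rw [A.T_pisom s hs]
  _ = f s * star (f s) * f s := by rw [map_mul, map_mul, hfstar]
  _ = f s * (star (f s) * f t) := by rw [h, mul_assoc]
  _ = f s * f (star s * t) := by rw [map_mul, hfstar]
  _ = 0 := by rw [hzero, map_zero, mul_zero]
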